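/- arXiv:2204.07306 — 3 statements merged into one kernel-verified Lean document; each statement's English description precedes it below -/
import Mathlib

section
/- Consider the two-block convex problem min over x ∈ ℝ^n, z ∈ ℝ^m of f(x) + g(z) subject to A x + B z = b, where f : ℝ^n → ℝ and g : ℝ^m → ℝ are convex, A ∈ ℝ^{p×n}, B ∈ ℝ^{p×m}, b ∈ ℝ^p, and let ρ > 0. Suppose sequences (x_k)_{k≥1}, (z_k)_{k≥1}, (λ_k)_{k≥1} satisfy the ADMM updates: x_{k+1} is a global minimizer over x of f(x) + ⟨λ_k, A x + B z_k − b⟩ + (ρ/2)‖A x + B z_k − b‖²; z_{k+1} is a global minimizer over z of g(z) + ⟨λ_k, A x_{k+1} + B z − b⟩ + (ρ/2)‖A x_{k+1} + B z − b‖²; and λ_{k+1} = λ_k + ρ(A x_{k+1} + B z_{k+1} − b). Then for every K ≥ 1, every pair (x, z) with A x + B z = b, and every λ ∈ ℝ^p, the ergodic averages x̄_K = (1/K)∑_{k=2}^{K+1} x_k and z̄_K = (1/K)∑_{k=2}^{K+1} z_k satisfy f(x̄_K) + g(z̄_K) − f(x) − g(z) + ⟨λ, A x̄_K + B z̄_K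 − b⟩ ≤ (1/K)·[(ρ/2)‖B z − B z_1‖² + (1/(2ρ))‖λ − λ_1‖²]. In particular, ADMM finds an ε-optimal solution in O(1/ε) iterations. -/
open Matrix Finset

lemma admm_dot_self_nonneg {P : ℕ} (v : Fin P → ℝ) : 0 ≤ v ⬝ᵥ v :=
  Finset.sum_nonneg fun _ _ => mul_self_nonneg _

lemma admm_linearize {N P : ℕ} (f : (Fin N → ℝ) → ℝ) (hf : ConvexOn ℝ Set.univ f)
    (M : Matrix (Fin P) (Fin N) ℝ) (c u : Fin P → ℝ) (ρ : ℝ) (hρ : 0 < ρ)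
    (x₀ : Fin N → ℝ)
    (hmin : ∀ x', f x₀ + u ⬝ᵥ (M *ᵥ x₀ + c) + (ρ/2) * ((M *ᵥ x₀ + c) ⬝ᵥ (M *ᵥ x₀ + c))
        ≤ f x' + u ⬝ᵥ (M *ᵥ x' + c) + (ρ/2) * ((M *ᵥ x' + c) ⬝ᵥ (M *ᵥ x' + c)))
    (x' : Fin N → ℝ) :
    f x₀ + (u + ρ • (M *ᵥ x₀ + c)) ⬝ᵥ (M *ᵥ x₀)
      ≤ f x' + (u + ρ • (M *ᵥ x₀ + c)) ⬝ᵥ (M *ᵥ x') := by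
  set r₀ := M *ᵥ x₀ + c with hr₀
  set Ad := M *ᵥ x' - M *ᵥ x₀ with hAd
  set s := u + ρ • r₀ with hs
  set C := (ρ/2) * (Ad ⬝ᵥ Ad) with hCdef
  have hC : 0 ≤ C := mul_nonneg (by linarith) (admm_dot_self_nonneg _)
  have hmain : ∀ t : ℝ, 0 < t → t ≤ 1 → 0 ≤ (f x' - f x₀) + s ⬝ᵥ Ad + t * C := by
    intro t ht ht1
    have hconv : f ((1-t) • x₀ + t • x') ≤ (1-t) * f x₀ + t * f x' :=
      hf.2 (Set.mem_univ _) (Set.mem_univ _) (by linarith) (le_of_lt ht) (by ring)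
    have hx_t := hmin ((1-t) • x₀ + t • x')
    have hAv : M *ᵥ ((1-t) • x₀ + t • x') + c = r₀ + t • Ad := by
      rw [Matrix.mulVec_add, Matrix.mulVec_smul, Matrix.mulVec_smul, hr₀, hAd]
      module
    rw [hAv] at hx_t
    have e1 : u ⬝ᵥ (r₀ + t • Ad) = u ⬝ᵥ r₀ + t * (u ⬝ᵥ Ad) := by
      simp [dotProduct_add, dotProduct_smul]
    have e2 : (r₀ + t • Ad) ⬝ᵥ (r₀ + t • Ad)
        = r₀ ⬝ᵥ r₀ + 2*t*(r₀ ⬝ᵥ Ad) + t^2*(Ad ⬝ᵥ Ad) := by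
      simp [dotProduct_add, add_dotProduct, dotProduct_smul, smul_dotProduct,
        dotProduct_comm Ad r₀]
      ring
    rw [e1, e2] at hx_t
    have e3 : s ⬝ᵥ Ad = u ⬝ᵥ Ad + ρ*(r₀ ⬝ᵥ Ad) := by
      simp [hs, add_dotProduct, smul_dotProduct]
    rw [e3, hCdef]
    nlinarith [hx_t, hconv, ht, mul_pos ht ht]
  have hfinal : 0 ≤ (f x' - f x₀) + s ⬝ᵥ Ad := by
    by_contra h
    push_neg at h
    set ε := -((f x' - f x₀) + s ⬝ᵥ Ad) with hε
    have hε0 : 0 < ε := by simp only [hε]; linarith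
    have hC1 : 0 < C + 1 := by linarith
    set t := min 1 (ε / (C+1)) with htdef
    have ht0 : 0 < t := lt_min one_pos (div_pos hε0 hC1)
    have ht1 : t ≤ 1 := min_le_left _ _
    have htC : t * C < ε := by
      calc t * C ≤ (ε/(C+1)) * C := mul_le_mul_of_nonneg_right (min_le_right _ _) hC
        _ < ε := by rw [div_mul_eq_mul_div, div_lt_iff₀ hC1]; nlinarith
    have := hmain t ht0 ht1
    simp only [hε] at *
    linarith
  have e4 : s ⬝ᵥ Ad = s ⬝ᵥ (M *ᵥ x') - s ⬝ᵥ (M *ᵥ x₀) := by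
    rw [hAd, dotProduct_sub]
  rw [e4] at hfinal
  linarith

lemma admm_per_step (p : ℕ) (ρ : ℝ) (hρ : 0 < ρ)
    (Ax1 Bz1 Bz0 Bzs Axs L lp bb L1 : Fin p → ℝ)
    (F1 Fs G1 Gs : ℝ)
    (hfeas : Axs + Bzs = bb)
    (VIx : F1 + (L + ρ • (Ax1 + (Bz0 - bb))) ⬝ᵥ Ax1
        ≤ Fs + (L + ρ • (Ax1 + (Bz0 - bb))) ⬝ᵥ Axs)
    (VIz : G1 + (L + ρ • (Bz1 + (Ax1 - bb))) ⬝ᵥ Bz1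
        ≤ Gs + (L + ρ • (Bz1 + (Ax1 - bb))) ⬝ᵥ Bzs)
    (hL1 : L1 = L + ρ • (Ax1 + Bz1 - bb)) :
    F1 + G1 - Fs - Gs + lp ⬝ᵥ (Ax1 + Bz1 - bb)
      ≤ ((ρ/2) * ((Bzs - Bz0) ⬝ᵥ (Bzs - Bz0)) + (1/(2*ρ)) * ((lp - L) ⬝ᵥ (lp - L)))
        - ((ρ/2) * ((Bzs - Bz1) ⬝ᵥ (Bzs - Bz1)) + (1/(2*ρ)) * ((lp - L1) ⬝ᵥ (lp - L1))) := by
  have hAxs : Axs = bb - Bzs := by rw [← hfeas]; abel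
  subst hAxs hL1
  have hw : 0 ≤ (ρ/2) * ((((Ax1 + Bz1 - bb) + (Bz0 - Bz1)))
      ⬝ᵥ (((Ax1 + Bz1 - bb) + (Bz0 - Bz1)))) :=
    mul_nonneg (by linarith) (admm_dot_self_nonneg _)
  have key :
      ((L + ρ • (Ax1 + (Bz0 - bb))) ⬝ᵥ (bb - Bzs) - (L + ρ • (Ax1 + (Bz0 - bb))) ⬝ᵥ Ax1)
      + ((L + ρ • (Bz1 + (Ax1 - bb))) ⬝ᵥ Bzs - (L + ρ • (Bz1 + (Ax1 - bb))) ⬝ᵥ Bz1)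
      + lp ⬝ᵥ (Ax1 + Bz1 - bb)
      = (((ρ/2) * ((Bzs - Bz0) ⬝ᵥ (Bzs - Bz0)) + (1/(2*ρ)) * ((lp - L) ⬝ᵥ (lp - L)))
          - ((ρ/2) * ((Bzs - Bz1) ⬝ᵥ (Bzs - Bz1))
            + (1/(2*ρ)) * ((lp - (L + ρ • (Ax1 + Bz1 - bb)))
                ⬝ᵥ (lp - (L + ρ • (Ax1 + Bz1 - bb))))))
        - (ρ/2) * ((((Ax1 + Bz1 - bb) + (Bz0 - Bz1)))
            ⬝ᵥ (((Ax1 + Bz1 - bb) + (Bz0 - Bz1)))) := by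
    simp only [add_dotProduct, dotProduct_add, sub_dotProduct, dotProduct_sub,
      smul_dotProduct, dotProduct_smul, smul_eq_mul]
    simp only [dotProduct_comm Bz1 Ax1, dotProduct_comm Bz0 Ax1, dotProduct_comm Bz0 Bz1,
      dotProduct_comm Bzs Ax1, dotProduct_comm Bzs Bz1, dotProduct_comm Bzs Bz0,
      dotProduct_comm L Ax1, dotProduct_comm L Bz1, dotProduct_comm L Bz0,
      dotProduct_comm L Bzs, dotProduct_comm lp Ax1, dotProduct_comm lp Bz1,
      dotProduct_comm lp Bz0, dotProduct_comm lp Bzs, dotProduct_comm lp L,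
      dotProduct_comm bb Ax1, dotProduct_comm bb Bz1, dotProduct_comm bb Bz0,
      dotProduct_comm bb Bzs, dotProduct_comm bb L, dotProduct_comm bb lp]
    field_simp
    ring
  linarith [VIx, VIz, key, hw]

/-- Ergodic `O(1/ε)` convergence of two-block ADMM for
`min f(x) + g(z)` subject to `A x + B z = b`, with `f, g` convex and penalty `ρ > 0`.
For any sequences satisfying the ADMM updates, every `K ≥ 1`, every feasible pair `(x, z)`
and every dual vector `λ`, the ergodic averages
`x̄_K = (1/K)∑_{k=2}^{K+1} x_k`, `z̄_K = (1/K)∑_{k=2}^{K+1} z_k` satisfy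
`f(x̄_K) + g(z̄_K) − f(x) − g(z) + ⟨λ, A x̄_K + B z̄_K − b⟩
  ≤ (1/K)[(ρ/2)‖B z − B z₁‖² + (1/(2ρ))‖λ − λ₁‖²]`;
in particular ADMM finds an ε-optimal solution in O(1/ε) iterations. -/
theorem admm_ergodic_O_one_over_eps
    (n m p : ℕ)
    (f : (Fin n → ℝ) → ℝ) (g : (Fin m → ℝ) → ℝ)
    (hf : ConvexOn ℝ Set.univ f) (hg : ConvexOn ℝ Set.univ g)
    (A : Matrix (Fin p) (Fin n) ℝ) (B : Matrix (Fin p) (Fin m) ℝ) (b : Fin p → ℝ)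
    (ρ : ℝ) (hρ : 0 < ρ)
    (x : ℕ → Fin n → ℝ) (z : ℕ → Fin m → ℝ) (lam : ℕ → Fin p → ℝ)
    (hx : ∀ k, 1 ≤ k → ∀ x' : Fin n → ℝ,
      f (x (k + 1)) + lam k ⬝ᵥ (A *ᵥ x (k + 1) + B *ᵥ z k - b)
        + (ρ / 2) * ((A *ᵥ x (k + 1) + B *ᵥ z k - b) ⬝ᵥ (A *ᵥ x (k + 1) + B *ᵥ z k - b))
      ≤ f x' + lam k ⬝ᵥ (A *ᵥ x' + B *ᵥ z k - b)
        + (ρ / 2) * ((A *ᵥ x' + B *ᵥ z k - b) ⬝ᵥ (A *ᵥ x' + B *ᵥ z k - b)))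
    (hz : ∀ k, 1 ≤ k → ∀ z' : Fin m → ℝ,
      g (z (k + 1)) + lam k ⬝ᵥ (A *ᵥ x (k + 1) + B *ᵥ z (k + 1) - b)
        + (ρ / 2) * ((A *ᵥ x (k + 1) + B *ᵥ z (k + 1) - b) ⬝ᵥ (A *ᵥ x (k + 1) + B *ᵥ z (k + 1) - b))
      ≤ g z' + lam k ⬝ᵥ (A *ᵥ x (k + 1) + B *ᵥ z' - b)
        + (ρ / 2) * ((A *ᵥ x (k + 1) + B *ᵥ z' - b) ⬝ᵥ (A *ᵥ x (k + 1) + B *ᵥ z' - b)))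
    (hlam : ∀ k, 1 ≤ k →
      lam (k + 1) = lam k + ρ • (A *ᵥ x (k + 1) + B *ᵥ z (k + 1) - b))
    (K : ℕ) (hK : 1 ≤ K)
    (xs : Fin n → ℝ) (zs : Fin m → ℝ) (hfeas : A *ᵥ xs + B *ᵥ zs = b)
    (lam' : Fin p → ℝ) :
    f ((1 / (K : ℝ)) • ∑ k ∈ Finset.Icc 2 (K + 1), x k)
      + g ((1 / (K : ℝ)) • ∑ k ∈ Finset.Icc 2 (K + 1), z k)
      - f xs - g zs
      + lam' ⬝ᵥ (A *ᵥ ((1 / (K : ℝ)) • ∑ k ∈ Finset.Icc 2 (K + 1), x k)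
          + B *ᵥ ((1 / (K : ℝ)) • ∑ k ∈ Finset.Icc 2 (K + 1), z k) - b)
    ≤ (1 / (K : ℝ)) *
        ((ρ / 2) * ((B *ᵥ zs - B *ᵥ z 1) ⬝ᵥ (B *ᵥ zs - B *ᵥ z 1))
          + (1 / (2 * ρ)) * ((lam' - lam 1) ⬝ᵥ (lam' - lam 1))) := by
  have hKne : (K : ℝ) ≠ 0 := Nat.cast_ne_zero.mpr (by omega)
  have hKpos : (0:ℝ) < K := by positivity
  -- the Lyapunov function
  set T : ℕ → ℝ := fun j =>
    (ρ / 2) * ((B *ᵥ zs - B *ᵥ z j) ⬝ᵥ (B *ᵥ zs - B *ᵥ z j))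
      + (1 / (2 * ρ)) * ((lam' - lam j) ⬝ᵥ (lam' - lam j)) with hTdef
  -- per-iteration descent
  have per : ∀ k : ℕ, 1 ≤ k →
      f (x (k+1)) + g (z (k+1)) - f xs - g zs
        + lam' ⬝ᵥ (A *ᵥ x (k+1) + B *ᵥ z (k+1) - b) ≤ T k - T (k+1) := by
    intro k hk
    have hxmin : ∀ x', f (x (k+1)) + lam k ⬝ᵥ (A *ᵥ x (k+1) + (B *ᵥ z k - b))
        + (ρ/2) * ((A *ᵥ x (k+1) + (B *ᵥ z k - b)) ⬝ᵥ (A *ᵥ x (k+1) + (B *ᵥ z k - b)))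
        ≤ f x' + lam k ⬝ᵥ (A *ᵥ x' + (B *ᵥ z k - b))
        + (ρ/2) * ((A *ᵥ x' + (B *ᵥ z k - b)) ⬝ᵥ (A *ᵥ x' + (B *ᵥ z k - b))) := by
      intro x'
      have h := hx k hk x'
      simpa only [add_sub_assoc] using h
    have VIx := admm_linearize f hf A (B *ᵥ z k - b) (lam k) ρ hρ (x (k+1)) hxmin xs
    have hzmin : ∀ z', g (z (k+1)) + lam k ⬝ᵥ (B *ᵥ z (k+1) + (A *ᵥ x (k+1) - b))
        + (ρ/2) * ((B *ᵥ z (k+1) + (A *ᵥ x (k+1) - b)) ⬝ᵥ (B *ᵥ z (k+1) + (A *ᵥ x (k+1) - b)))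
        ≤ g z' + lam k ⬝ᵥ (B *ᵥ z' + (A *ᵥ x (k+1) - b))
        + (ρ/2) * ((B *ᵥ z' + (A *ᵥ x (k+1) - b)) ⬝ᵥ (B *ᵥ z' + (A *ᵥ x (k+1) - b))) := by
      intro z'
      have h := hz k hk z'
      have e : ∀ v : Fin p → ℝ, A *ᵥ x (k+1) + v - b = v + (A *ᵥ x (k+1) - b) := by
        intro v; abel
      simpa only [e] using h
    have VIz := admm_linearize g hg B (A *ᵥ x (k+1) - b) (lam k) ρ hρ (z (k+1)) hzmin zs
    have := admm_per_step p ρ hρ (A *ᵥ x (k+1)) (B *ᵥ z (k+1)) (B *ᵥ z k) (B *ᵥ zs)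
      (A *ᵥ xs) (lam k) lam' b (lam (k+1))
      (f (x (k+1))) (f xs) (g (z (k+1))) (g zs) hfeas VIx VIz (hlam k hk)
    simpa only [hTdef] using this
  -- telescoping sum
  have sum1 : ∑ i ∈ Finset.range K,
      (f (x (i+1+1)) + g (z (i+1+1)) - f xs - g zs
        + lam' ⬝ᵥ (A *ᵥ x (i+1+1) + B *ᵥ z (i+1+1) - b)) ≤ T 1 - T (K+1) := by
    calc ∑ i ∈ Finset.range K,
        (f (x (i+1+1)) + g (z (i+1+1)) - f xs - g zs
          + lam' ⬝ᵥ (A *ᵥ x (i+1+1) + B *ᵥ z (i+1+1) - b))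
        ≤ ∑ i ∈ Finset.range K, (T (i+1) - T (i+1+1)) :=
          Finset.sum_le_sum fun i _ => per (i+1) (Nat.le_add_left 1 i)
      _ = T 1 - T (K+1) := by
          simpa using Finset.sum_range_sub' (fun i => T (i+1)) K
  have hTK : 0 ≤ T (K+1) := by
    simp only [hTdef]
    have h1 : (0:ℝ) ≤ 1 / (2*ρ) := by positivity
    exact add_nonneg (mul_nonneg (by linarith) (admm_dot_self_nonneg _))
      (mul_nonneg h1 (admm_dot_self_nonneg _))
  -- reindex sums in the goal
  have hxsum : ∑ k ∈ Finset.Icc 2 (K + 1), x k = ∑ i ∈ Finset.range K, x (i+1+1) := by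
    rw [← Finset.Ico_add_one_right_eq_Icc, Finset.sum_Ico_eq_sum_range]
    rw [show K + 1 + 1 - 2 = K by omega]
    exact Finset.sum_congr rfl fun i _ => by rw [show 2 + i = i + 1 + 1 by omega]
  have hzsum : ∑ k ∈ Finset.Icc 2 (K + 1), z k = ∑ i ∈ Finset.range K, z (i+1+1) := by
    rw [← Finset.Ico_add_one_right_eq_Icc, Finset.sum_Ico_eq_sum_range]
    rw [show K + 1 + 1 - 2 = K by omega]
    exact Finset.sum_congr rfl fun i _ => by rw [show 2 + i = i + 1 + 1 by omega]
  rw [hxsum, hzsum]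
  -- Jensen
  have hwsum : ∑ _i ∈ Finset.range K, (1 / (K:ℝ)) = 1 := by
    rw [Finset.sum_const, Finset.card_range, nsmul_eq_mul]
    field_simp
  have hJf : f ((1 / (K:ℝ)) • ∑ i ∈ Finset.range K, x (i+1+1))
      ≤ ∑ i ∈ Finset.range K, (1 / (K:ℝ)) * f (x (i+1+1)) := by
    rw [Finset.smul_sum]
    exact hf.map_sum_le (fun i _ => by positivity) hwsum (fun i _ => Set.mem_univ _)
  have hJg : g ((1 / (K:ℝ)) • ∑ i ∈ Finset.range K, z (i+1+1))
      ≤ ∑ i ∈ Finset.range K, (1 / (K:ℝ)) * g (z (i+1+1)) := by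
    rw [Finset.smul_sum]
    exact hg.map_sum_le (fun i _ => by positivity) hwsum (fun i _ => Set.mem_univ _)
  -- linearity of the dual pairing
  have hmulA : A *ᵥ ((1 / (K:ℝ)) • ∑ i ∈ Finset.range K, x (i+1+1))
      = ∑ i ∈ Finset.range K, (1 / (K:ℝ)) • (A *ᵥ x (i+1+1)) := by
    have h1 : A *ᵥ (∑ i ∈ Finset.range K, x (i+1+1))
        = ∑ i ∈ Finset.range K, A *ᵥ x (i+1+1) := by
      have h := map_sum (Matrix.mulVecLin A) (fun i => x (i+1+1)) (Finset.range K)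
      simp only [Matrix.mulVecLin_apply] at h
      exact h
    rw [Matrix.mulVec_smul, h1, Finset.smul_sum]
  have hmulB : B *ᵥ ((1 / (K:ℝ)) • ∑ i ∈ Finset.range K, z (i+1+1))
      = ∑ i ∈ Finset.range K, (1 / (K:ℝ)) • (B *ᵥ z (i+1+1)) := by
    have h1 : B *ᵥ (∑ i ∈ Finset.range K, z (i+1+1))
        = ∑ i ∈ Finset.range K, B *ᵥ z (i+1+1) := by
      have h := map_sum (Matrix.mulVecLin B) (fun i => z (i+1+1)) (Finset.range K)
      simp only [Matrix.mulVecLin_apply] at h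
      exact h
    rw [Matrix.mulVec_smul, h1, Finset.smul_sum]
  have hbb : ∑ _i ∈ Finset.range K, (1 / (K:ℝ)) • b = b := by
    rw [Finset.sum_const, Finset.card_range, ← Nat.cast_smul_eq_nsmul ℝ, smul_smul]
    rw [show (K:ℝ) * (1 / (K:ℝ)) = 1 by field_simp]
    exact one_smul _ _
  have hvec : A *ᵥ ((1 / (K:ℝ)) • ∑ i ∈ Finset.range K, x (i+1+1))
      + B *ᵥ ((1 / (K:ℝ)) • ∑ i ∈ Finset.range K, z (i+1+1)) - b
      = ∑ i ∈ Finset.range K,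
          (1 / (K:ℝ)) • (A *ᵥ x (i+1+1) + B *ᵥ z (i+1+1) - b) := by
    have hsplit : ∑ i ∈ Finset.range K,
        (1 / (K:ℝ)) • (A *ᵥ x (i+1+1) + B *ᵥ z (i+1+1) - b)
        = (∑ i ∈ Finset.range K, (1 / (K:ℝ)) • (A *ᵥ x (i+1+1)))
          + (∑ i ∈ Finset.range K, (1 / (K:ℝ)) • (B *ᵥ z (i+1+1)))
          - ∑ _i ∈ Finset.range K, (1 / (K:ℝ)) • b := by
      rw [← Finset.sum_add_distrib, ← Finset.sum_sub_distrib]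
      exact Finset.sum_congr rfl fun i _ => by rw [smul_sub, smul_add]
    rw [hmulA, hmulB, hsplit, hbb]
  have hds : ∀ (v : ℕ → Fin p → ℝ),
      lam' ⬝ᵥ (∑ i ∈ Finset.range K, v i) = ∑ i ∈ Finset.range K, lam' ⬝ᵥ (v i) := by
    intro v
    simp only [dotProduct, Finset.sum_apply, Finset.mul_sum]
    exact Finset.sum_comm
  have hdual : lam' ⬝ᵥ (A *ᵥ ((1 / (K:ℝ)) • ∑ i ∈ Finset.range K, x (i+1+1))
      + B *ᵥ ((1 / (K:ℝ)) • ∑ i ∈ Finset.range K, z (i+1+1)) - b)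
      = ∑ i ∈ Finset.range K,
          (1 / (K:ℝ)) * (lam' ⬝ᵥ (A *ᵥ x (i+1+1) + B *ᵥ z (i+1+1) - b)) := by
    rw [hvec, hds]
    exact Finset.sum_congr rfl fun i _ => by rw [dotProduct_smul, smul_eq_mul]
  have hconstsum : ∀ c : ℝ, ∑ _i ∈ Finset.range K, (1 / (K:ℝ)) * c = c := by
    intro c
    rw [Finset.sum_const, Finset.card_range, nsmul_eq_mul]
    field_simp
  -- assemble
  calc f ((1 / (K:ℝ)) • ∑ i ∈ Finset.range K, x (i+1+1))
        + g ((1 / (K:ℝ)) • ∑ i ∈ Finset.range K, z (i+1+1)) - f xs - g zs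
        + lam' ⬝ᵥ (A *ᵥ ((1 / (K:ℝ)) • ∑ i ∈ Finset.range K, x (i+1+1))
            + B *ᵥ ((1 / (K:ℝ)) • ∑ i ∈ Finset.range K, z (i+1+1)) - b)
      ≤ (∑ i ∈ Finset.range K, (1 / (K:ℝ)) * f (x (i+1+1)))
        + (∑ i ∈ Finset.range K, (1 / (K:ℝ)) * g (z (i+1+1))) - f xs - g zs
        + ∑ i ∈ Finset.range K,
            (1 / (K:ℝ)) * (lam' ⬝ᵥ (A *ᵥ x (i+1+1) + B *ᵥ z (i+1+1) - b)) := by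
        rw [hdual]; linarith [hJf, hJg]
    _ = (1 / (K:ℝ)) * ∑ i ∈ Finset.range K,
          (f (x (i+1+1)) + g (z (i+1+1)) - f xs - g zs
            + lam' ⬝ᵥ (A *ᵥ x (i+1+1) + B *ᵥ z (i+1+1) - b)) := by
        rw [Finset.mul_sum]
        simp only [mul_add, mul_sub, Finset.sum_add_distrib, Finset.sum_sub_distrib,
          hconstsum]
    _ ≤ (1 / (K:ℝ)) * (T 1 - T (K+1)) := by
        apply mul_le_mul_of_nonneg_left sum1 (by positivity)
    _ ≤ (1 / (K:ℝ)) * T 1 := by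
        apply mul_le_mul_of_nonneg_left (by linarith) (by positivity)
    _ = (1 / (K : ℝ)) *
        ((ρ / 2) * ((B *ᵥ zs - B *ᵥ z 1) ⬝ᵥ (B *ᵥ zs - B *ᵥ z 1))
          + (1 / (2 * ρ)) * ((lam' - lam 1) ⬝ᵥ (lam' - lam 1))) := by
        simp only [hTdef]
end

section
/- Let ρ > 0, let M, N be finite index sets, and let λ₂ ∈ ℝ^{N}, Λ₇ ∈ ℝ^{M×N}, S ∈ ℝ^{M×N}. Define ψ : ℝ^{M×N} → ℝ by ψ(W) = ⟨λ₂, Wᵀ𝟏 − 𝟏⟩ + ⟨Λ₇, W − S⟩_F + (ρ/2)‖Wᵀ𝟏 − 𝟏‖² + (ρ/2)‖W − S‖²_F, where 𝟏 denotes the all-ones vector, ⟨·,·⟩_F the Frobenius (entrywise) inner product, and ‖·‖_F the Frobenius norm. Then the matrix I + 𝟏𝟏ᵀ ∈ ℝ^{M×M} is positive definite (hence invertible), ψ is strictly convex, and its unique global minimizer is W* = (1/ρ)(I + 𝟏𝟏ᵀ)⁻¹(ρ𝟏𝟏ᵀ + ρS − Λ₇ − 𝟏λ₂ᵀ). -/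
open Matrix

section WUpdateAux

set_option linter.unusedSectionVars false

variable {M N : Type*} [Fintype M] [Fintype N]

private noncomputable def wuPsi (ρ : ℝ) (lam₂ : N → ℝ) (Lam₇ S : Matrix M N ℝ)
    (W : Matrix M N ℝ) : ℝ :=
  lam₂ ⬝ᵥ (Wᵀ *ᵥ (1 : M → ℝ) - (1 : N → ℝ))
    + (∑ m : M, ∑ n : N, Lam₇ m n * (W m n - S m n))
    + (ρ / 2) * ((Wᵀ *ᵥ (1 : M → ℝ) - (1 : N → ℝ)) ⬝ᵥ (Wᵀ *ᵥ (1 : M → ℝ) - (1 : N → ℝ)))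
    + (ρ / 2) * (∑ m : M, ∑ n : N, (W m n - S m n) ^ 2)

private noncomputable def wuL (ρ : ℝ) (lam₂ : N → ℝ) (Lam₇ S : Matrix M N ℝ)
    (X D : Matrix M N ℝ) : ℝ :=
  ∑ m : M, ∑ n : N,
    (lam₂ n + Lam₇ m n + ρ * ((∑ k : M, X k n) - 1) + ρ * (X m n - S m n)) * D m n

private noncomputable def wuQ (ρ : ℝ) (D : Matrix M N ℝ) : ℝ :=
  (ρ / 2) * ((∑ n : N, (∑ m : M, D m n) ^ 2) + ∑ m : M, ∑ n : N, (D m n) ^ 2)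

private lemma colsum_eq (W : Matrix M N ℝ) :
    Wᵀ *ᵥ (1 : M → ℝ) = fun n => ∑ m : M, W m n := by
  funext n
  simp [mulVec, dotProduct]

private lemma wuPsi_expand (ρ : ℝ) (lam₂ : N → ℝ) (Lam₇ S : Matrix M N ℝ)
    (X D : Matrix M N ℝ) :
    wuPsi ρ lam₂ Lam₇ S (X + D)
      = wuPsi ρ lam₂ Lam₇ S X + wuL ρ lam₂ Lam₇ S X D + wuQ ρ D := by
  set A1 : ℝ := ∑ n : N, lam₂ n * ((∑ m : M, X m n) - 1) with hA1
  set A2 : ℝ := ∑ n : N, lam₂ n * (∑ m : M, D m n) with hA2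
  set B1 : ℝ := ∑ m : M, ∑ n : N, Lam₇ m n * (X m n - S m n) with hB1
  set B2 : ℝ := ∑ m : M, ∑ n : N, Lam₇ m n * D m n with hB2
  set C1 : ℝ := ∑ n : N, ((∑ m : M, X m n) - 1) * ((∑ m : M, X m n) - 1) with hC1
  set C2 : ℝ := ∑ n : N, ((∑ m : M, X m n) - 1) * (∑ m : M, D m n) with hC2
  set C3 : ℝ := ∑ n : N, (∑ m : M, D m n) ^ 2 with hC3
  set E1 : ℝ := ∑ m : M, ∑ n : N, (X m n - S m n) ^ 2 with hE1
  set E2 : ℝ := ∑ m : M, ∑ n : N, (X m n - S m n) * D m n with hE2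
  set E3 : ℝ := ∑ m : M, ∑ n : N, (D m n) ^ 2 with hE3
  have h1 : ∀ n : N, ∑ m : M, (X m n + D m n) = (∑ m : M, X m n) + ∑ m : M, D m n := by
    intro n; rw [Finset.sum_add_distrib]
  have hLHS : wuPsi ρ lam₂ Lam₇ S (X + D)
      = (A1 + A2) + (B1 + B2) + (ρ / 2) * (C1 + 2 * C2 + C3)
        + (ρ / 2) * (E1 + 2 * E2 + E3) := by
    simp only [wuPsi, colsum_eq, dotProduct, Pi.sub_apply, Pi.one_apply, Matrix.add_apply, h1]
    have t1 : ∑ n : N, lam₂ n * ((∑ m : M, X m n) + (∑ m : M, D m n) - 1) = A1 + A2 := by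
      rw [hA1, hA2, ← Finset.sum_add_distrib]
      exact Finset.sum_congr rfl fun n _ => by ring
    have t2 : ∑ m : M, ∑ n : N, Lam₇ m n * (X m n + D m n - S m n) = B1 + B2 := by
      rw [hB1, hB2, ← Finset.sum_add_distrib]
      refine Finset.sum_congr rfl fun m _ => ?_
      rw [← Finset.sum_add_distrib]
      exact Finset.sum_congr rfl fun n _ => by ring
    have t3 : ∑ n : N,
        ((∑ m : M, X m n) + (∑ m : M, D m n) - 1)
          * ((∑ m : M, X m n) + (∑ m : M, D m n) - 1) = C1 + 2 * C2 + C3 := by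
      rw [hC1, hC2, hC3, Finset.mul_sum, ← Finset.sum_add_distrib, ← Finset.sum_add_distrib]
      exact Finset.sum_congr rfl fun n _ => by ring
    have t4 : ∑ m : M, ∑ n : N, (X m n + D m n - S m n) ^ 2 = E1 + 2 * E2 + E3 := by
      rw [hE1, hE2, hE3, Finset.mul_sum, ← Finset.sum_add_distrib, ← Finset.sum_add_distrib]
      refine Finset.sum_congr rfl fun m _ => ?_
      rw [Finset.mul_sum, ← Finset.sum_add_distrib, ← Finset.sum_add_distrib]
      exact Finset.sum_congr rfl fun n _ => by ring
    rw [t1, t2, t3, t4]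
  have hX : wuPsi ρ lam₂ Lam₇ S X = A1 + B1 + (ρ / 2) * C1 + (ρ / 2) * E1 := by
    simp only [wuPsi, colsum_eq, dotProduct, Pi.sub_apply, Pi.one_apply, hA1, hB1, hC1, hE1]
  have hLlin : wuL ρ lam₂ Lam₇ S X D = A2 + B2 + ρ * C2 + ρ * E2 := by
    have split : wuL ρ lam₂ Lam₇ S X D
        = (∑ m : M, ∑ n : N, lam₂ n * D m n) + B2
          + (∑ m : M, ∑ n : N, ρ * (((∑ k : M, X k n) - 1) * D m n))
          + (∑ m : M, ∑ n : N, ρ * ((X m n - S m n) * D m n)) := by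
      rw [wuL, hB2, ← Finset.sum_add_distrib, ← Finset.sum_add_distrib,
        ← Finset.sum_add_distrib]
      refine Finset.sum_congr rfl fun m _ => ?_
      rw [← Finset.sum_add_distrib, ← Finset.sum_add_distrib, ← Finset.sum_add_distrib]
      exact Finset.sum_congr rfl fun n _ => by ring
    rw [split]
    have u1 : ∑ m : M, ∑ n : N, lam₂ n * D m n = A2 := by
      rw [Finset.sum_comm, hA2]
      exact Finset.sum_congr rfl fun n _ => (Finset.mul_sum _ _ _).symm
    have u2 : ∑ m : M, ∑ n : N, ρ * (((∑ k : M, X k n) - 1) * D m n) = ρ * C2 := by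
      rw [Finset.sum_comm, hC2, Finset.mul_sum]
      refine Finset.sum_congr rfl fun n _ => ?_
      rw [Finset.mul_sum, Finset.mul_sum]
    have u3 : ∑ m : M, ∑ n : N, ρ * ((X m n - S m n) * D m n) = ρ * E2 := by
      rw [hE2, Finset.mul_sum]
      refine Finset.sum_congr rfl fun m _ => ?_
      rw [Finset.mul_sum]
    rw [u1, u2, u3]
  have hQ : wuQ ρ D = (ρ / 2) * (C3 + E3) := by rw [wuQ, hC3, hE3]
  rw [hLHS, hX, hLlin, hQ]; ring

private lemma wuL_smul (ρ : ℝ) (lam₂ : N → ℝ) (Lam₇ S : Matrix M N ℝ)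
    (X : Matrix M N ℝ) (b : ℝ) (D : Matrix M N ℝ) :
    wuL ρ lam₂ Lam₇ S X (b • D) = b * wuL ρ lam₂ Lam₇ S X D := by
  rw [wuL, wuL, Finset.mul_sum]
  refine Finset.sum_congr rfl fun m _ => ?_
  rw [Finset.mul_sum]
  refine Finset.sum_congr rfl fun n _ => ?_
  simp only [Matrix.smul_apply, smul_eq_mul]
  ring

private lemma wuQ_smul (ρ : ℝ) (b : ℝ) (D : Matrix M N ℝ) :
    wuQ ρ (b • D) = b ^ 2 * wuQ ρ D := by
  rw [wuQ, wuQ]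
  simp only [Matrix.smul_apply, smul_eq_mul, ← Finset.mul_sum, mul_pow]
  ring

private lemma wuQ_nonneg {ρ : ℝ} (hρ : 0 < ρ) (D : Matrix M N ℝ) : 0 ≤ wuQ ρ D := by
  have c3 : (0:ℝ) ≤ ∑ n : N, (∑ m : M, D m n) ^ 2 :=
    Finset.sum_nonneg fun n _ => sq_nonneg _
  have e3 : (0:ℝ) ≤ ∑ m : M, ∑ n : N, (D m n) ^ 2 :=
    Finset.sum_nonneg fun m _ => Finset.sum_nonneg fun n _ => sq_nonneg _
  rw [wuQ]
  nlinarith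

private lemma wuQ_pos {ρ : ℝ} (hρ : 0 < ρ) {D : Matrix M N ℝ} (hD : D ≠ 0) :
    0 < wuQ ρ D := by
  have c3 : (0:ℝ) ≤ ∑ n : N, (∑ m : M, D m n) ^ 2 :=
    Finset.sum_nonneg fun n _ => sq_nonneg _
  obtain ⟨m, n, hmn⟩ : ∃ m n, D m n ≠ 0 := by
    by_contra h
    push_neg at h
    exact hD (by ext m n; simpa using h m n)
  have e3 : (0:ℝ) < ∑ m : M, ∑ n : N, (D m n) ^ 2 := by
    refine Finset.sum_pos' (fun m _ => Finset.sum_nonneg fun n _ => sq_nonneg _)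
      ⟨m, Finset.mem_univ m, Finset.sum_pos' (fun n _ => sq_nonneg _)
        ⟨n, Finset.mem_univ n, sq_pos_of_ne_zero hmn⟩⟩
  rw [wuQ]
  nlinarith

end WUpdateAux

theorem W_update_aux
    {M N : Type*} [Fintype M] [Fintype N] [DecidableEq M]
    (ρ : ℝ) (hρ : 0 < ρ)
    (lam₂ : N → ℝ) (Lam₇ S : Matrix M N ℝ) :
    ((1 : Matrix M M ℝ) + vecMulVec (1 : M → ℝ) (1 : M → ℝ)).PosDef ∧
    IsUnit ((1 : Matrix M M ℝ) + vecMulVec (1 : M → ℝ) (1 : M → ℝ)) ∧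
    StrictConvexOn ℝ Set.univ (wuPsi ρ lam₂ Lam₇ S) ∧
    (∀ W : Matrix M N ℝ,
      wuPsi ρ lam₂ Lam₇ S ((1 / ρ) •
        (((1 : Matrix M M ℝ) + vecMulVec (1 : M → ℝ) (1 : M → ℝ))⁻¹ *
          (ρ • vecMulVec (1 : M → ℝ) (1 : N → ℝ) + ρ • S - Lam₇ - vecMulVec (1 : M → ℝ) lam₂)))
      ≤ wuPsi ρ lam₂ Lam₇ S W) ∧
    (∀ W : Matrix M N ℝ, (∀ V : Matrix M N ℝ, wuPsi ρ lam₂ Lam₇ S W ≤ wuPsi ρ lam₂ Lam₇ S V) →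
      W = (1 / ρ) • (((1 : Matrix M M ℝ) + vecMulVec (1 : M → ℝ) (1 : M → ℝ))⁻¹ *
            (ρ • vecMulVec (1 : M → ℝ) (1 : N → ℝ) + ρ • S - Lam₇ - vecMulVec (1 : M → ℝ) lam₂))) := by
  set A : Matrix M M ℝ := (1 : Matrix M M ℝ) + vecMulVec (1 : M → ℝ) (1 : M → ℝ) with hA
  set B : Matrix M N ℝ :=
    ρ • vecMulVec (1 : M → ℝ) (1 : N → ℝ) + ρ • S - Lam₇ - vecMulVec (1 : M → ℝ) lam₂ with hB
  set Wstar : Matrix M N ℝ := (1 / ρ) • (A⁻¹ * B) with hWstar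
  -- positive definiteness
  have hPD : A.PosDef := by
    rw [Matrix.posDef_iff_dotProduct_mulVec]
    constructor
    · show Aᴴ = A
      ext i j
      simp only [hA, Matrix.conjTranspose_apply, Matrix.add_apply, Matrix.one_apply,
        vecMulVec_apply, Pi.one_apply, star_trivial]
      by_cases h : i = j <;> simp [h, eq_comm]
    · intro x hx
      have hsx : star x = x := by funext i; simp
      have hval : dotProduct (star x) (A *ᵥ x) = (∑ i : M, x i ^ 2) + (∑ i : M, x i) ^ 2 := by
        rw [hsx, hA, Matrix.add_mulVec, Matrix.one_mulVec]
        have hK : (vecMulVec (1 : M → ℝ) (1 : M → ℝ)) *ᵥ x = fun _ => ∑ j : M, x j := by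
          funext i; simp [mulVec, dotProduct, vecMulVec_apply]
        rw [hK]
        simp only [dotProduct, Pi.add_apply]
        have : ∀ i : M, x i * (x i + ∑ j : M, x j) = x i ^ 2 + x i * ∑ j : M, x j := by
          intros; ring
        simp only [this, Finset.sum_add_distrib, ← Finset.sum_mul, sq]
      rw [hval]
      obtain ⟨i, hi⟩ : ∃ i, x i ≠ 0 := by
        by_contra h; push_neg at h; exact hx (funext fun i => h i)
      have h1 : 0 < ∑ i : M, x i ^ 2 :=
        Finset.sum_pos' (fun i _ => sq_nonneg _) ⟨i, Finset.mem_univ i, sq_pos_of_ne_zero hi⟩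
      nlinarith [sq_nonneg (∑ i : M, x i)]
  have hUdet : IsUnit A.det := isUnit_iff_ne_zero.mpr hPD.det_pos.ne'
  have hU : IsUnit A := (Matrix.isUnit_iff_isUnit_det A).2 hUdet
  -- stationarity
  have hAB : A * (ρ • Wstar) = B := by
    rw [hWstar, Matrix.mul_smul, Matrix.mul_smul, smul_smul,
      mul_one_div_cancel hρ.ne', one_smul, ← Matrix.mul_assoc,
      Matrix.mul_nonsing_inv A hUdet, Matrix.one_mul]
  have hE : ∀ (m : M) (n : N),
      ρ * Wstar m n + ρ * (∑ k : M, Wstar k n)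
        = ρ * 1 + ρ * S m n - Lam₇ m n - lam₂ n := by
    intro m n
    have h := congrFun (congrFun hAB m) n
    have hl : (A * (ρ • Wstar)) m n = ρ * Wstar m n + ρ * (∑ k : M, Wstar k n) := by
      rw [Matrix.mul_apply]
      simp only [hA, Matrix.add_apply, Matrix.one_apply, vecMulVec_apply, Pi.one_apply,
        Matrix.smul_apply, smul_eq_mul, add_mul, one_mul, ite_mul, zero_mul]
      rw [Finset.sum_add_distrib, Finset.sum_ite_eq, ← Finset.mul_sum]
      simp
    have hr : B m n = ρ * 1 + ρ * S m n - Lam₇ m n - lam₂ n := by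
      simp [hB, Matrix.sub_apply, Matrix.add_apply, Matrix.smul_apply, vecMulVec_apply]
    rw [hl, hr] at h
    exact h
  have hgrad : ∀ (m : M) (n : N),
      lam₂ n + Lam₇ m n + ρ * ((∑ k : M, Wstar k n) - 1) + ρ * (Wstar m n - S m n) = 0 := by
    intro m n
    have := hE m n
    nlinarith [this]
  have hL0 : ∀ D : Matrix M N ℝ, wuL ρ lam₂ Lam₇ S Wstar D = 0 := by
    intro D
    rw [wuL]
    exact Finset.sum_eq_zero fun m _ => Finset.sum_eq_zero fun n _ => by
      rw [hgrad m n, zero_mul]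
  -- minimizer
  have hmin : ∀ W : Matrix M N ℝ, wuPsi ρ lam₂ Lam₇ S Wstar ≤ wuPsi ρ lam₂ Lam₇ S W := by
    intro W
    have h := wuPsi_expand ρ lam₂ Lam₇ S Wstar (W - Wstar)
    have e : Wstar + (W - Wstar) = W := by abel
    rw [e, hL0] at h
    have := wuQ_nonneg hρ (W - Wstar)
    linarith
  -- uniqueness
  have huniq : ∀ W : Matrix M N ℝ,
      (∀ V : Matrix M N ℝ, wuPsi ρ lam₂ Lam₇ S W ≤ wuPsi ρ lam₂ Lam₇ S V) → W = Wstar := by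
    intro W h
    by_contra hW
    have h1 := h Wstar
    have h2 := wuPsi_expand ρ lam₂ Lam₇ S Wstar (W - Wstar)
    have e : Wstar + (W - Wstar) = W := by abel
    rw [e, hL0] at h2
    have hq := wuQ_pos hρ (sub_ne_zero.mpr hW)
    linarith
  -- strict convexity
  have hconv : StrictConvexOn ℝ Set.univ (wuPsi ρ lam₂ Lam₇ S) := by
    refine ⟨convex_univ, fun x _ y _ hxy a b ha hb hab => ?_⟩
    have ea : a = 1 - b := by linarith
    subst ea
    have e : (1 - b) • x + b • y = x + b • (y - x) := by module
    have h1 := wuPsi_expand ρ lam₂ Lam₇ S x (b • (y - x))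
    rw [wuL_smul, wuQ_smul] at h1
    have h2 := wuPsi_expand ρ lam₂ Lam₇ S x (y - x)
    have ey : x + (y - x) = y := by abel
    rw [ey] at h2
    have hq := wuQ_pos hρ (sub_ne_zero.mpr (Ne.symm hxy))
    rw [e, h1, h2]
    simp only [smul_eq_mul]
    nlinarith [mul_pos (mul_pos ha hb) hq]
  exact ⟨hPD, hU, hconv, hmin, huniq⟩


/-- The W-update step of the distributed ADMM incentivization algorithm:
`ψ(W) = ⟨λ₂, Wᵀ𝟏 − 𝟏⟩ + ⟨Λ₇, W − S⟩_F + (ρ/2)‖Wᵀ𝟏 − 𝟏‖² + (ρ/2)‖W − S‖²_F` is strictly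
convex, the matrix `I + 𝟏𝟏ᵀ` is positive definite (hence invertible), and the unique global
minimizer is `W* = (1/ρ)(I + 𝟏𝟏ᵀ)⁻¹(ρ𝟏𝟏ᵀ + ρS − Λ₇ − 𝟏λ₂ᵀ)`. -/
theorem W_update_strictConvex_unique_minimizer
    {M N : Type*} [Fintype M] [Fintype N] [DecidableEq M]
    (ρ : ℝ) (hρ : 0 < ρ)
    (lam₂ : N → ℝ) (Lam₇ S : Matrix M N ℝ) :
    ((1 : Matrix M M ℝ) + vecMulVec (1 : M → ℝ) (1 : M → ℝ)).PosDef ∧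
    IsUnit ((1 : Matrix M M ℝ) + vecMulVec (1 : M → ℝ) (1 : M → ℝ)) ∧
    StrictConvexOn ℝ Set.univ (fun W : Matrix M N ℝ =>
      lam₂ ⬝ᵥ (Wᵀ *ᵥ (1 : M → ℝ) - (1 : N → ℝ))
        + (∑ m : M, ∑ n : N, Lam₇ m n * (W m n - S m n))
        + (ρ / 2) * ((Wᵀ *ᵥ (1 : M → ℝ) - (1 : N → ℝ)) ⬝ᵥ (Wᵀ *ᵥ (1 : M → ℝ) - (1 : N → ℝ)))
        + (ρ / 2) * (∑ m : M, ∑ n : N, (W m n - S m n) ^ 2)) ∧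
    (∀ W : Matrix M N ℝ,
      (fun W : Matrix M N ℝ =>
        lam₂ ⬝ᵥ (Wᵀ *ᵥ (1 : M → ℝ) - (1 : N → ℝ))
          + (∑ m : M, ∑ n : N, Lam₇ m n * (W m n - S m n))
          + (ρ / 2) * ((Wᵀ *ᵥ (1 : M → ℝ) - (1 : N → ℝ)) ⬝ᵥ (Wᵀ *ᵥ (1 : M → ℝ) - (1 : N → ℝ)))
          + (ρ / 2) * (∑ m : M, ∑ n : N, (W m n - S m n) ^ 2))
        ((1 / ρ) • (((1 : Matrix M M ℝ) + vecMulVec (1 : M → ℝ) (1 : M → ℝ))⁻¹ *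
          (ρ • vecMulVec (1 : M → ℝ) (1 : N → ℝ) + ρ • S - Lam₇ - vecMulVec (1 : M → ℝ) lam₂)))
      ≤ (fun W : Matrix M N ℝ =>
        lam₂ ⬝ᵥ (Wᵀ *ᵥ (1 : M → ℝ) - (1 : N → ℝ))
          + (∑ m : M, ∑ n : N, Lam₇ m n * (W m n - S m n))
          + (ρ / 2) * ((Wᵀ *ᵥ (1 : M → ℝ) - (1 : N → ℝ)) ⬝ᵥ (Wᵀ *ᵥ (1 : M → ℝ) - (1 : N → ℝ)))
          + (ρ / 2) * (∑ m : M, ∑ n : N, (W m n - S m n) ^ 2)) W) ∧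
    (∀ W : Matrix M N ℝ,
      (∀ V : Matrix M N ℝ,
        (fun W : Matrix M N ℝ =>
          lam₂ ⬝ᵥ (Wᵀ *ᵥ (1 : M → ℝ) - (1 : N → ℝ))
            + (∑ m : M, ∑ n : N, Lam₇ m n * (W m n - S m n))
            + (ρ / 2) * ((Wᵀ *ᵥ (1 : M → ℝ) - (1 : N → ℝ)) ⬝ᵥ (Wᵀ *ᵥ (1 : M → ℝ) - (1 : N → ℝ)))
            + (ρ / 2) * (∑ m : M, ∑ n : N, (W m n - S m n) ^ 2)) W
        ≤ (fun W : Matrix M N ℝ =>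
          lam₂ ⬝ᵥ (Wᵀ *ᵥ (1 : M → ℝ) - (1 : N → ℝ))
            + (∑ m : M, ∑ n : N, Lam₇ m n * (W m n - S m n))
            + (ρ / 2) * ((Wᵀ *ᵥ (1 : M → ℝ) - (1 : N → ℝ)) ⬝ᵥ (Wᵀ *ᵥ (1 : M → ℝ) - (1 : N → ℝ)))
            + (ρ / 2) * (∑ m : M, ∑ n : N, (W m n - S m n) ^ 2)) V) →
      W = (1 / ρ) • (((1 : Matrix M M ℝ) + vecMulVec (1 : M → ℝ) (1 : M → ℝ))⁻¹ *
            (ρ • vecMulVec (1 : M → ℝ) (1 : N → ℝ) + ρ • S - Lam₇ - vecMulVec (1 : M → ℝ) lam₂))) := by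
  exact W_update_aux ρ hρ lam₂ Lam₇ S
end

section
/- Let ρ > 0, let M, N be finite index sets, and let u ∈ ℝ^{M}, λ₁ ∈ ℝ^{M}, Λ₅, Λ₇, H, W ∈ ℝ^{M×N}. Define χ : ℝ^{M×N} → ℝ by χ(S) = ⟨λ₁, S𝟏 − u⟩ + ⟨Λ₅, H − S⟩_F + ⟨Λ₇, W − S⟩_F + (ρ/2)‖S𝟏 − u‖² + (ρ/2)‖H − S‖²_F + (ρ/2)‖W − S‖²_F, where 𝟏 ∈ ℝ^{N} is the all-ones vector, ⟨·,·⟩_F the Frobenius inner product, and ‖·‖_F the Frobenius norm. Then the matrix 𝟏𝟏ᵀ + 2I ∈ ℝ^{N×N} is positive definite (hence invertible), χ is strictly convex, and its unique global minimizer is S* = (ρ u𝟏ᵀ + Λ₅ + ρH + Λ₇ + ρW − λ₁𝟏ᵀ)(ρ(𝟏𝟏ᵀ + 2I))⁻¹. -/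
open Matrix Finset

private lemma posdefA {N : Type*} [Fintype N] [DecidableEq N] :
    (vecMulVec (1 : N → ℝ) (1 : N → ℝ) + (2 : ℝ) • (1 : Matrix N N ℝ)).PosDef := by
  rw [posDef_iff_dotProduct_mulVec]
  constructor
  · unfold Matrix.IsHermitian
    ext i j
    simp [vecMulVec_apply, Matrix.one_apply, Matrix.conjTranspose_apply, eq_comm]
  · intro x hx
    have hq : star x ⬝ᵥ (vecMulVec (1 : N → ℝ) (1 : N → ℝ) + (2 : ℝ) • (1 : Matrix N N ℝ)) *ᵥ x
        = (∑ i, x i)^2 + 2 * ∑ i, (x i)^2 := by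
      simp [dotProduct, mulVec, vecMulVec_apply, Finset.mul_sum, Finset.sum_add_distrib,
        Matrix.one_apply, mul_add, mul_ite, mul_zero, mul_one, Finset.sum_ite_eq,
        sq, Finset.sum_mul, mul_comm, mul_left_comm]
      exact Finset.sum_congr rfl fun i _ => by ring
    rw [hq]
    have h2 : 0 < ∑ i, (x i)^2 := by
      obtain ⟨i, hi⟩ : ∃ i, x i ≠ 0 := by
        by_contra h; push_neg at h; exact hx (funext h)
      exact Finset.sum_pos' (fun j _ => sq_nonneg _) ⟨i, Finset.mem_univ i, by positivity⟩
    nlinarith [sq_nonneg (∑ i, x i)]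

private lemma rowkey {N : Type*} [Fintype N] (ρ a um : ℝ) (L5 L7 Hr Wr s t : N → ℝ)
    (h1 : ∀ n, L5 n + L7 n + ρ*Hr n + ρ*Wr n
      = ρ*(∑ k, t k) + 2*ρ*t n - ρ*um + a) :
    a*((∑ n, s n) - um) + (∑ n, L5 n*(Hr n - s n)) + (∑ n, L7 n*(Wr n - s n))
      + (ρ/2)*((∑ n, s n) - um)^2 + (ρ/2)*(∑ n, (Hr n - s n)^2) + (ρ/2)*(∑ n, (Wr n - s n)^2)
    = a*((∑ n, t n) - um) + (∑ n, L5 n*(Hr n - t n)) + (∑ n, L7 n*(Wr n - t n))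
      + (ρ/2)*((∑ n, t n) - um)^2 + (ρ/2)*(∑ n, (Hr n - t n)^2) + (ρ/2)*(∑ n, (Wr n - t n)^2)
      + (ρ/2)*((∑ n, (s n - t n))^2 + 2*∑ n, (s n - t n)^2) := by
  have key : ∑ n, ((L5 n*(Hr n - s n) + L7 n*(Wr n - s n)
        + (ρ/2)*(Hr n - s n)^2 + (ρ/2)*(Wr n - s n)^2)
      - (L5 n*(Hr n - t n) + L7 n*(Wr n - t n)
        + (ρ/2)*(Hr n - t n)^2 + (ρ/2)*(Wr n - t n)^2)
      - ρ*(s n - t n)^2)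
      = ∑ n, ((t n - s n) * (ρ*(∑ k, t k) - ρ*um + a)) := by
    refine Finset.sum_congr rfl fun n _ => ?_
    linear_combination (t n - s n) * h1 n
  rw [← Finset.sum_mul] at key
  simp only [Finset.sum_sub_distrib, Finset.sum_add_distrib, ← Finset.mul_sum] at key
  have hst : ∑ n, (s n - t n) = (∑ n, s n) - ∑ n, t n := by
    rw [Finset.sum_sub_distrib]
  rw [hst]
  linear_combination key

private lemma rowq1 {N : Type*} [Fintype N] (a b : ℝ) (hab : a + b = 1) (x y : N → ℝ) :
    (∑ n, (a * x n + b * y n))^2 + 2 * ∑ n, (a * x n + b * y n)^2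
      = a * ((∑ n, x n)^2 + 2 * ∑ n, (x n)^2) + b * ((∑ n, y n)^2 + 2 * ∑ n, (y n)^2)
        - a * b * ((∑ n, (x n - y n))^2 + 2 * ∑ n, (x n - y n)^2) := by
  have h2 : ∑ n, (a * x n + b * y n)^2
      = ∑ n, (a * (x n)^2 + b * (y n)^2 - a*b*(x n - y n)^2) := by
    refine Finset.sum_congr rfl fun n _ => ?_
    linear_combination (a * x n ^ 2 + b * y n ^ 2) * hab
  rw [h2]
  simp only [Finset.sum_add_distrib, Finset.sum_sub_distrib, ← Finset.mul_sum]
  have hb : b = 1 - a := by linarith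
  subst hb
  ring

private def Qm {M N : Type*} [Fintype M] [Fintype N] (X : Matrix M N ℝ) : ℝ :=
  ∑ m, ((∑ n, X m n)^2 + 2 * ∑ n, (X m n)^2)

private lemma Qm_nonneg {M N : Type*} [Fintype M] [Fintype N] (X : Matrix M N ℝ) :
    0 ≤ Qm X :=
  Finset.sum_nonneg fun m _ => by positivity

private lemma Qm_pos {M N : Type*} [Fintype M] [Fintype N] {X : Matrix M N ℝ}
    (hX : X ≠ 0) : 0 < Qm X := by
  obtain ⟨m, n, hmn⟩ : ∃ m n, X m n ≠ 0 := by
    by_contra h; push_neg at h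
    exact hX (Matrix.ext fun m n => h m n)
  refine Finset.sum_pos' (fun m _ => by positivity) ⟨m, Finset.mem_univ m, ?_⟩
  have : 0 < ∑ n, (X m n)^2 :=
    Finset.sum_pos' (fun j _ => sq_nonneg _) ⟨n, Finset.mem_univ n, by positivity⟩
  nlinarith [sq_nonneg (∑ n, X m n)]

private lemma Qm_comb {M N : Type*} [Fintype M] [Fintype N] (a b : ℝ) (hab : a + b = 1)
    (X Y : Matrix M N ℝ) :
    Qm (a • X + b • Y) = a * Qm X + b * Qm Y - a * b * Qm (X - Y) := by
  unfold Qm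
  rw [Finset.mul_sum, Finset.mul_sum, Finset.mul_sum, ← Finset.sum_add_distrib,
    ← Finset.sum_sub_distrib]
  refine Finset.sum_congr rfl fun m _ => ?_
  simpa [Matrix.add_apply, Matrix.smul_apply, Matrix.sub_apply, smul_eq_mul]
    using rowq1 a b hab (fun n => X m n) (fun n => Y m n)

/-- The S-update step of the distributed ADMM incentivization algorithm:
`χ(S) = ⟨λ₁, S𝟏 − u⟩ + ⟨Λ₅, H − S⟩_F + ⟨Λ₇, W − S⟩_F
  + (ρ/2)‖S𝟏 − u‖² + (ρ/2)‖H − S‖²_F + (ρ/2)‖W − S‖²_F`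
is strictly convex, the matrix `𝟏𝟏ᵀ + 2I ∈ ℝ^{N×N}` is positive definite (hence invertible),
and the unique global minimizer of `χ` is
`S* = (ρ u𝟏ᵀ + Λ₅ + ρH + Λ₇ + ρW − λ₁𝟏ᵀ)(ρ(𝟏𝟏ᵀ + 2I))⁻¹`. -/
theorem S_update_strictConvex_unique_minimizer
    {M N : Type*} [Fintype M] [Fintype N] [DecidableEq N]
    (ρ : ℝ) (hρ : 0 < ρ)
    (u lam₁ : M → ℝ) (Lam₅ Lam₇ H W : Matrix M N ℝ) :
    (vecMulVec (1 : N → ℝ) (1 : N → ℝ) + (2 : ℝ) • (1 : Matrix N N ℝ)).PosDef ∧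
    IsUnit (vecMulVec (1 : N → ℝ) (1 : N → ℝ) + (2 : ℝ) • (1 : Matrix N N ℝ)) ∧
    StrictConvexOn ℝ Set.univ (fun S : Matrix M N ℝ =>
      lam₁ ⬝ᵥ (S *ᵥ (1 : N → ℝ) - u)
        + (∑ m : M, ∑ n : N, Lam₅ m n * (H m n - S m n))
        + (∑ m : M, ∑ n : N, Lam₇ m n * (W m n - S m n))
        + (ρ / 2) * ((S *ᵥ (1 : N → ℝ) - u) ⬝ᵥ (S *ᵥ (1 : N → ℝ) - u))
        + (ρ / 2) * (∑ m : M, ∑ n : N, (H m n - S m n) ^ 2)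
        + (ρ / 2) * (∑ m : M, ∑ n : N, (W m n - S m n) ^ 2)) ∧
    (∀ S : Matrix M N ℝ,
      (fun S : Matrix M N ℝ =>
        lam₁ ⬝ᵥ (S *ᵥ (1 : N → ℝ) - u)
          + (∑ m : M, ∑ n : N, Lam₅ m n * (H m n - S m n))
          + (∑ m : M, ∑ n : N, Lam₇ m n * (W m n - S m n))
          + (ρ / 2) * ((S *ᵥ (1 : N → ℝ) - u) ⬝ᵥ (S *ᵥ (1 : N → ℝ) - u))
          + (ρ / 2) * (∑ m : M, ∑ n : N, (H m n - S m n) ^ 2)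
          + (ρ / 2) * (∑ m : M, ∑ n : N, (W m n - S m n) ^ 2))
        ((ρ • vecMulVec u (1 : N → ℝ) + Lam₅ + ρ • H + Lam₇ + ρ • W
            - vecMulVec lam₁ (1 : N → ℝ)) *
          (ρ • (vecMulVec (1 : N → ℝ) (1 : N → ℝ) + (2 : ℝ) • (1 : Matrix N N ℝ)))⁻¹)
      ≤ (fun S : Matrix M N ℝ =>
        lam₁ ⬝ᵥ (S *ᵥ (1 : N → ℝ) - u)
          + (∑ m : M, ∑ n : N, Lam₅ m n * (H m n - S m n))
          + (∑ m : M, ∑ n : N, Lam₇ m n * (W m n - S m n))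
          + (ρ / 2) * ((S *ᵥ (1 : N → ℝ) - u) ⬝ᵥ (S *ᵥ (1 : N → ℝ) - u))
          + (ρ / 2) * (∑ m : M, ∑ n : N, (H m n - S m n) ^ 2)
          + (ρ / 2) * (∑ m : M, ∑ n : N, (W m n - S m n) ^ 2)) S) ∧
    (∀ S : Matrix M N ℝ,
      (∀ V : Matrix M N ℝ,
        (fun S : Matrix M N ℝ =>
          lam₁ ⬝ᵥ (S *ᵥ (1 : N → ℝ) - u)
            + (∑ m : M, ∑ n : N, Lam₅ m n * (H m n - S m n))
            + (∑ m : M, ∑ n : N, Lam₇ m n * (W m n - S m n))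
            + (ρ / 2) * ((S *ᵥ (1 : N → ℝ) - u) ⬝ᵥ (S *ᵥ (1 : N → ℝ) - u))
            + (ρ / 2) * (∑ m : M, ∑ n : N, (H m n - S m n) ^ 2)
            + (ρ / 2) * (∑ m : M, ∑ n : N, (W m n - S m n) ^ 2)) S
        ≤ (fun S : Matrix M N ℝ =>
          lam₁ ⬝ᵥ (S *ᵥ (1 : N → ℝ) - u)
            + (∑ m : M, ∑ n : N, Lam₅ m n * (H m n - S m n))
            + (∑ m : M, ∑ n : N, Lam₇ m n * (W m n - S m n))
            + (ρ / 2) * ((S *ᵥ (1 : N → ℝ) - u) ⬝ᵥ (S *ᵥ (1 : N → ℝ) - u))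
            + (ρ / 2) * (∑ m : M, ∑ n : N, (H m n - S m n) ^ 2)
            + (ρ / 2) * (∑ m : M, ∑ n : N, (W m n - S m n) ^ 2)) V) →
      S = (ρ • vecMulVec u (1 : N → ℝ) + Lam₅ + ρ • H + Lam₇ + ρ • W
            - vecMulVec lam₁ (1 : N → ℝ)) *
          (ρ • (vecMulVec (1 : N → ℝ) (1 : N → ℝ) + (2 : ℝ) • (1 : Matrix N N ℝ)))⁻¹) := by
  classical
  set A : Matrix N N ℝ := vecMulVec (1 : N → ℝ) (1 : N → ℝ) + (2 : ℝ) • (1 : Matrix N N ℝ)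
    with hA
  set B : Matrix M N ℝ := ρ • vecMulVec u (1 : N → ℝ) + Lam₅ + ρ • H + Lam₇ + ρ • W
      - vecMulVec lam₁ (1 : N → ℝ) with hB
  set S₀ : Matrix M N ℝ := B * (ρ • A)⁻¹ with hS₀
  set F : Matrix M N ℝ → ℝ := fun S : Matrix M N ℝ =>
      lam₁ ⬝ᵥ (S *ᵥ (1 : N → ℝ) - u)
        + (∑ m : M, ∑ n : N, Lam₅ m n * (H m n - S m n))
        + (∑ m : M, ∑ n : N, Lam₇ m n * (W m n - S m n))
        + (ρ / 2) * ((S *ᵥ (1 : N → ℝ) - u) ⬝ᵥ (S *ᵥ (1 : N → ℝ) - u))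
        + (ρ / 2) * (∑ m : M, ∑ n : N, (H m n - S m n) ^ 2)
        + (ρ / 2) * (∑ m : M, ∑ n : N, (W m n - S m n) ^ 2) with hF
  have hApos : A.PosDef := posdefA
  have hsm : (ρ • A).PosDef := by
    rw [posDef_iff_dotProduct_mulVec]
    constructor
    · show (ρ • A)ᴴ = ρ • A
      rw [conjTranspose_smul, hApos.1]
      norm_num
    · intro x hx
      have hq : star x ⬝ᵥ (ρ • A) *ᵥ x = ρ * (star x ⬝ᵥ A *ᵥ x) := by
        rw [smul_mulVec, dotProduct_smul, smul_eq_mul]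
      rw [hq]
      exact mul_pos hρ (hApos.dotProduct_mulVec_pos hx)
  have hstat : S₀ * (ρ • A) = B :=
    Matrix.nonsing_inv_mul_cancel_right _ _ hsm.det_pos.ne'.isUnit
  have hrow : ∀ m n, Lam₅ m n + Lam₇ m n + ρ * H m n + ρ * W m n
      = ρ * (∑ k, S₀ m k) + 2 * ρ * S₀ m n - ρ * u m + lam₁ m := by
    intro m n
    have h := congrFun (congrFun hstat m) n
    have hl : (S₀ * (ρ • A)) m n = ρ * (∑ k, S₀ m k) + 2 * ρ * S₀ m n := by
      rw [Matrix.mul_apply]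
      simp only [hA, Matrix.smul_apply, Matrix.add_apply, vecMulVec_apply, Pi.one_apply,
        Matrix.one_apply, smul_eq_mul, smul_ite, mul_ite, mul_one, mul_zero, mul_add,
        Finset.sum_add_distrib, Finset.sum_ite_eq', Finset.mem_univ, if_true, ← Finset.mul_sum]
      rw [← Finset.sum_mul]
      ring
    have hr : B m n = ρ * u m + Lam₅ m n + ρ * H m n + Lam₇ m n + ρ * W m n - lam₁ m := by
      simp [hB, Matrix.add_apply, Matrix.sub_apply, Matrix.smul_apply, vecMulVec_apply]
    rw [hl, hr] at h
    linarith
  have fform : ∀ S : Matrix M N ℝ, F S = ∑ m, (lam₁ m * ((∑ n, S m n) - u m)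
      + (∑ n, Lam₅ m n * (H m n - S m n)) + (∑ n, Lam₇ m n * (W m n - S m n))
      + (ρ/2) * ((∑ n, S m n) - u m)^2
      + (ρ/2) * (∑ n, (H m n - S m n)^2) + (ρ/2) * (∑ n, (W m n - S m n)^2)) := by
    intro S
    rw [hF]
    simp only [Finset.sum_add_distrib, Finset.sum_sub_distrib, ← Finset.mul_sum, dotProduct,
      mulVec, Pi.sub_apply, Pi.one_apply, mul_one, mul_sub, sq]
  have keyid : ∀ S : Matrix M N ℝ, F S = F S₀ + (ρ/2) * Qm (S - S₀) := by
    intro S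
    rw [fform S, fform S₀]
    unfold Qm
    rw [Finset.mul_sum, ← Finset.sum_add_distrib]
    refine Finset.sum_congr rfl fun m _ => ?_
    simpa [Matrix.sub_apply] using rowkey ρ (lam₁ m) (u m) (fun n => Lam₅ m n)
      (fun n => Lam₇ m n) (fun n => H m n) (fun n => W m n)
      (fun n => S m n) (fun n => S₀ m n) (hrow m)
  have hmin : ∀ S : Matrix M N ℝ, F S₀ ≤ F S := by
    intro S
    rw [keyid S]
    exact le_add_of_nonneg_right (mul_nonneg (by linarith) (Qm_nonneg (S - S₀)))
  clear hstat hrow fform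
  clear_value F S₀ B A
  refine ⟨hApos, hApos.isUnit, ?_, hmin, ?_⟩
  · refine ⟨convex_univ, ?_⟩
    intro x _ y _ hxy a b ha hb hab
    simp only [smul_eq_mul]
    rw [keyid x, keyid y, keyid (a • x + b • y)]
    have hs : a • S₀ + b • S₀ = S₀ := by rw [← add_smul, hab, one_smul]
    have hc : a • x + b • y - S₀ = a • (x - S₀) + b • (y - S₀) :=
      calc a • x + b • y - S₀ = a • x + b • y - (a • S₀ + b • S₀) := by rw [hs]
        _ = a • (x - S₀) + b • (y - S₀) := by rw [smul_sub, smul_sub]; abel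
    rw [hc, Qm_comb a b hab]
    have hxy0 : x - S₀ - (y - S₀) ≠ 0 := by
      have hsub : x - S₀ - (y - S₀) = x - y := by abel
      rw [hsub]
      exact sub_ne_zero.2 hxy
    have hq : 0 < Qm (x - S₀ - (y - S₀)) := Qm_pos hxy0
    have hb' : b = 1 - a := by linarith
    subst hb'
    nlinarith [mul_pos (half_pos hρ) (mul_pos (mul_pos ha hb) hq)]
  · intro S h
    by_contra hne
    have h1 : F S ≤ F S₀ := h S₀
    rw [keyid S] at h1
    have hq : 0 < Qm (S - S₀) := Qm_pos (sub_ne_zero.2 hne)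
    have := mul_pos (half_pos hρ) hq
    linarith
end
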